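/- Let L_max > 0 and 0 < α < 1/L_max, and consider iterates x_{s+1} = x_s − α∇f_{i_s}(x_s) where each f_i is L_i-smooth with L_i ≤ L_max. Then for any t ≥ k ≥ 1, ‖x_{t−k} − x_t‖ ≤ (α/(1 − αL_max)) · (1/(1 − αL_max))^{k−1} · ∑_{l=1}^{k} ‖∇f_{i_{t−l}}(x_t)‖. -/

import Mathlib

/-- Drift bound for past iterates of SGD-type updates (Corollary 1). -/
theorem iterate_drift_bound (d n : ℕ) (Lmax α : ℝ) (hLmax : 0 < Lmax)
    (hα : 0 < α) (hα2 : α < 1 / Lmax)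
    (f : Fin n → EuclideanSpace ℝ (Fin d) → ℝ) (L : Fin n → ℝ)
    (hdiff : ∀ i, Differentiable ℝ (f i))
    (hlip : ∀ i x y, ‖gradient (f i) x - gradient (f i) y‖ ≤ L i * ‖x - y‖)
    (hLle : ∀ i, L i ≤ Lmax)
    (x : ℕ → EuclideanSpace ℝ (Fin d)) (idx : ℕ → Fin n)
    (hupd : ∀ s, x (s + 1) = x s - α • gradient (f (idx s)) (x s))
    (t k : ℕ) (hk : 1 ≤ k) (hkt : k ≤ t) :
    ‖x (t - k) - x t‖ ≤
      (α / (1 - α * Lmax)) * (1 / (1 - α * Lmax)) ^ (k - 1) *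
        ∑ l ∈ Finset.Icc 1 k, ‖gradient (f (idx (t - l))) (x t)‖ := by
  have hαL : α * Lmax < 1 := (lt_div_iff₀ hLmax).mp hα2
  have hpos : 0 < 1 - α * Lmax := by linarith
  set ρ := 1 / (1 - α * Lmax) with hρ
  have hρpos : 0 < ρ := by positivity
  have hρ1 : 1 ≤ ρ := by
    rw [hρ, le_div_iff₀ hpos]
    nlinarith [mul_pos hα hLmax]
  have main : ∀ m, m ≤ t →
      ‖x (t - m) - x t‖ ≤ α * ρ ^ m *
        ∑ l ∈ Finset.Icc 1 m, ‖gradient (f (idx (t - l))) (x t)‖ := by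
    intro m
    induction m with
    | zero => intro _; simp
    | succ m ih =>
      intro hm1
      have hm' : m ≤ t := Nat.le_of_succ_le hm1
      have hDm := ih hm'
      set s := t - (m + 1) with hs
      have hs1 : s + 1 = t - m := by omega
      have hx : x (s + 1) = x s - α • gradient (f (idx s)) (x s) := hupd s
      have hlip' : ‖gradient (f (idx s)) (x s) - gradient (f (idx s)) (x t)‖
          ≤ Lmax * ‖x s - x t‖ := by
        calc ‖gradient (f (idx s)) (x s) - gradient (f (idx s)) (x t)‖
            ≤ L (idx s) * ‖x s - x t‖ := hlip _ _ _
          _ ≤ Lmax * ‖x s - x t‖ :=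
              mul_le_mul_of_nonneg_right (hLle _) (norm_nonneg _)
      have step1 : ‖x s - x t‖ ≤ ‖x (s + 1) - x t‖ + α * ‖gradient (f (idx s)) (x s)‖ := by
        have hdecomp : x s - x t = (x (s + 1) - x t) + α • gradient (f (idx s)) (x s) := by
          rw [hx]; abel
        rw [hdecomp]
        refine (norm_add_le _ _).trans ?_
        rw [norm_smul, Real.norm_of_nonneg hα.le]
      have step2 : ‖gradient (f (idx s)) (x s)‖
          ≤ ‖gradient (f (idx s)) (x t)‖ + Lmax * ‖x s - x t‖ := by
        have h := norm_sub_norm_le (gradient (f (idx s)) (x s)) (gradient (f (idx s)) (x t))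
        linarith
      have hineq : (1 - α * Lmax) * ‖x s - x t‖
          ≤ ‖x (t - m) - x t‖ + α * ‖gradient (f (idx s)) (x t)‖ := by
        rw [hs1] at step1
        nlinarith [norm_nonneg (x s - x t)]
      have hbound : ‖x s - x t‖
          ≤ ρ * (‖x (t - m) - x t‖ + α * ‖gradient (f (idx s)) (x t)‖) := by
        rw [hρ, div_mul_eq_mul_div, le_div_iff₀ hpos, mul_comm (‖x s - x t‖)]
        linarith
      have hsum : ∑ l ∈ Finset.Icc 1 (m + 1), ‖gradient (f (idx (t - l))) (x t)‖
          = (∑ l ∈ Finset.Icc 1 m, ‖gradient (f (idx (t - l))) (x t)‖)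
            + ‖gradient (f (idx s)) (x t)‖ := by
        rw [Finset.sum_Icc_succ_top (by omega)]
      have hSnn : 0 ≤ ∑ l ∈ Finset.Icc 1 m, ‖gradient (f (idx (t - l))) (x t)‖ :=
        Finset.sum_nonneg fun _ _ => norm_nonneg _
      have hgnn : 0 ≤ ‖gradient (f (idx s)) (x t)‖ := norm_nonneg _
      have hρpow : (1 : ℝ) ≤ ρ ^ m := one_le_pow₀ hρ1
      calc ‖x (t - (m + 1)) - x t‖
          ≤ ρ * (‖x (t - m) - x t‖ + α * ‖gradient (f (idx s)) (x t)‖) := hbound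
        _ ≤ ρ * ((α * ρ ^ m * ∑ l ∈ Finset.Icc 1 m, ‖gradient (f (idx (t - l))) (x t)‖)
              + α * ‖gradient (f (idx s)) (x t)‖) := by
            have := hDm
            nlinarith [hρpos.le]
        _ ≤ α * ρ ^ (m + 1) *
              ∑ l ∈ Finset.Icc 1 (m + 1), ‖gradient (f (idx (t - l))) (x t)‖ := by
            rw [hsum, pow_succ]
            nlinarith [mul_nonneg (mul_nonneg hα.le hgnn)
              (mul_nonneg hρpos.le (sub_nonneg.mpr hρpow))]
  have hfinal := main k hkt
  have hk1 : k - 1 + 1 = k := by omega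
  have hcoef : α * ρ ^ k = (α / (1 - α * Lmax)) * (1 / (1 - α * Lmax)) ^ (k - 1) := by
    rw [← hk1, pow_succ', hρ]
    field_simp
    rw [Nat.add_sub_cancel]
  rw [hρ] at hfinal
  rw [← hcoef]
  exact hfinal
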